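/- arXiv:2003.10921 — 8 statements merged into one kernel-verified Lean document; each statement's English description precedes it below -/
import Mathlib

section
/- Let a₁, a₂, a₃ ∈ ℂ with |a₁| < 1, and suppose 0 ≤ 1 + 2·Re(a₁ · conj a₂ · a₃) − |a₁|² − |a₂|² − |a₃|². Then |a₂| ≤ 1, |a₃| ≤ 1, and the 3×3 Hermitian matrix N with rows (1, a₁, a₂), (conj a₁, 1, a₃), (conj a₂, conj a₃, 1) is positive semidefinite. -/
open scoped ComplexOrder

private lemma amgm_aux {p q c V W : ℝ} (hp : 0 ≤ p) (hq : 0 ≤ q) (hc : 0 ≤ c)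
    (hpq : c ^ 2 ≤ p * q) (hV : 0 ≤ V) (hW : 0 ≤ W) :
    2 * (c * V * W) ≤ p * V ^ 2 + q * W ^ 2 := by
  have hs := Real.sq_sqrt hp
  have ht := Real.sq_sqrt hq
  have hs0 := Real.sqrt_nonneg p
  have ht0 := Real.sqrt_nonneg q
  have hcst : c ≤ Real.sqrt p * Real.sqrt q := by
    have h1 : c = Real.sqrt (c ^ 2) := (Real.sqrt_sq hc).symm
    rw [h1, ← Real.sqrt_mul hp q]
    exact Real.sqrt_le_sqrt hpq
  nlinarith [sq_nonneg (Real.sqrt p * V - Real.sqrt q * W), mul_nonneg hV hW]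

private lemma quad_aux (a₁ a₂ u v w b : ℂ)
    (hp0 : 0 < 1 - ‖a₁‖ ^ 2)
    (hq0 : 0 ≤ 1 - ‖a₂‖ ^ 2)
    (hkey : ‖b‖ ^ 2 ≤ (1 - ‖a₁‖ ^ 2) * (1 - ‖a₂‖ ^ 2)) :
    0 ≤ Complex.normSq (u + a₁ * v + a₂ * w)
        + (1 - ‖a₁‖ ^ 2) * Complex.normSq v
        + (1 - ‖a₂‖ ^ 2) * Complex.normSq w
        + 2 * ((starRingEnd ℂ) v * b * w).re := by
  have habs : |((starRingEnd ℂ) v * b * w).re| ≤ ‖v‖ * ‖b‖ * ‖w‖ := by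
    calc |((starRingEnd ℂ) v * b * w).re| ≤ ‖(starRingEnd ℂ) v * b * w‖ :=
          Complex.abs_re_le_norm _
      _ = ‖v‖ * ‖b‖ * ‖w‖ := by simp [map_mul]
  have h1 : -(‖v‖ * ‖b‖ * ‖w‖) ≤ ((starRingEnd ℂ) v * b * w).re :=
    by linarith [(abs_le.mp habs).1]
  have h2 := amgm_aux (le_of_lt hp0) hq0 (norm_nonneg b) hkey
      (norm_nonneg v) (norm_nonneg w)
  have hnv : Complex.normSq v = ‖v‖ ^ 2 := (Complex.sq_norm v).symm
  have hnw : Complex.normSq w = ‖w‖ ^ 2 := (Complex.sq_norm w).symm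
  nlinarith [Complex.normSq_nonneg (u + a₁ * v + a₂ * w)]

/-- If `|a₁| < 1` and `0 ≤ 1 + 2 Re(a₁ conj a₂ a₃) − |a₁|² − |a₂|² − |a₃|²`,
then `|a₂| ≤ 1`, `|a₃| ≤ 1`, and the Hermitian matrix
`N = !![1, a₁, a₂; conj a₁, 1, a₃; conj a₂, conj a₃, 1]` is positive semidefinite. -/
theorem stmt_2 (a₁ a₂ a₃ : ℂ) (h₁ : ‖a₁‖ < 1)
    (hdet : 0 ≤ 1 + 2 * (a₁ * (starRingEnd ℂ) a₂ * a₃).re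
        - ‖a₁‖ ^ 2 - ‖a₂‖ ^ 2 - ‖a₃‖ ^ 2) :
    ‖a₂‖ ≤ 1 ∧ ‖a₃‖ ≤ 1 ∧
      (!![1, a₁, a₂;
          (starRingEnd ℂ) a₁, 1, a₃;
          (starRingEnd ℂ) a₂, (starRingEnd ℂ) a₃, 1] : Matrix (Fin 3) (Fin 3) ℂ).PosSemidef := by
  have ha₁ : 0 ≤ ‖a₁‖ := norm_nonneg a₁
  have hp0 : 0 < 1 - ‖a₁‖ ^ 2 := by nlinarith
  set b : ℂ := a₃ - (starRingEnd ℂ) a₁ * a₂ with hbdef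
  have hid : 1 + 2 * (a₁ * (starRingEnd ℂ) a₂ * a₃).re
      - ‖a₁‖ ^ 2 - ‖a₂‖ ^ 2 - ‖a₃‖ ^ 2
      = (1 - ‖a₁‖ ^ 2) * (1 - ‖a₂‖ ^ 2) - ‖b‖ ^ 2 := by
    simp only [hbdef, Complex.sq_norm, Complex.normSq_apply, Complex.mul_re, Complex.mul_im,
      Complex.sub_re, Complex.sub_im, Complex.conj_re, Complex.conj_im]
    ring
  have hid' : 1 + 2 * (a₁ * (starRingEnd ℂ) a₂ * a₃).re
      - ‖a₁‖ ^ 2 - ‖a₂‖ ^ 2 - ‖a₃‖ ^ 2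
      = (1 - ‖a₁‖ ^ 2) * (1 - ‖a₃‖ ^ 2)
        - ‖a₂ - a₁ * a₃‖ ^ 2 := by
    simp only [Complex.sq_norm, Complex.normSq_apply, Complex.mul_re, Complex.mul_im,
      Complex.sub_re, Complex.sub_im, Complex.conj_re, Complex.conj_im]
    ring
  have hkey : ‖b‖ ^ 2 ≤ (1 - ‖a₁‖ ^ 2) * (1 - ‖a₂‖ ^ 2) := by
    rw [hid] at hdet; linarith
  have hq0 : 0 ≤ 1 - ‖a₂‖ ^ 2 := by
    by_contra hneg
    push_neg at hneg
    nlinarith [sq_nonneg (‖b‖)]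
  have ha₂ : ‖a₂‖ ≤ 1 := by nlinarith [norm_nonneg a₂]
  have ha₃ : ‖a₃‖ ≤ 1 := by
    rw [hid'] at hdet
    have hq3 : 0 ≤ 1 - ‖a₃‖ ^ 2 := by
      by_contra hneg
      push_neg at hneg
      nlinarith [sq_nonneg (‖a₂ - a₁ * a₃‖)]
    nlinarith [norm_nonneg a₃]
  refine ⟨ha₂, ha₃, Matrix.posSemidef_iff_dotProduct_mulVec.mpr ⟨?_, ?_⟩⟩
  · ext i j
    fin_cases i <;> fin_cases j <;> simp [Matrix.conjTranspose_apply]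
  · intro x
    rw [Complex.le_def]
    have hexp : (dotProduct (star x)
        ((!![1, a₁, a₂;
          (starRingEnd ℂ) a₁, 1, a₃;
          (starRingEnd ℂ) a₂, (starRingEnd ℂ) a₃, 1] : Matrix (Fin 3) (Fin 3) ℂ).mulVec x))
        = (starRingEnd ℂ) (x 0) * (1 * x 0 + a₁ * x 1 + a₂ * x 2)
          + (starRingEnd ℂ) (x 1) * ((starRingEnd ℂ) a₁ * x 0 + 1 * x 1 + a₃ * x 2)
          + (starRingEnd ℂ) (x 2) * ((starRingEnd ℂ) a₂ * x 0 + (starRingEnd ℂ) a₃ * x 1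
            + 1 * x 2) := by
      simp [dotProduct, Matrix.mulVec, Fin.sum_univ_three, mul_add, mul_comm]
      ring
    rw [hexp]
    constructor
    · have hre : ((starRingEnd ℂ) (x 0) * (1 * x 0 + a₁ * x 1 + a₂ * x 2)
          + (starRingEnd ℂ) (x 1) * ((starRingEnd ℂ) a₁ * x 0 + 1 * x 1 + a₃ * x 2)
          + (starRingEnd ℂ) (x 2) * ((starRingEnd ℂ) a₂ * x 0 + (starRingEnd ℂ) a₃ * x 1
            + 1 * x 2)).re
          = Complex.normSq (x 0 + a₁ * x 1 + a₂ * x 2)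
            + (1 - ‖a₁‖ ^ 2) * Complex.normSq (x 1)
            + (1 - ‖a₂‖ ^ 2) * Complex.normSq (x 2)
            + 2 * ((starRingEnd ℂ) (x 1) * b * x 2).re := by
        simp only [hbdef, Complex.sq_norm, Complex.normSq_apply, Complex.mul_re, Complex.mul_im,
          Complex.add_re, Complex.add_im, Complex.sub_re, Complex.sub_im,
          Complex.conj_re, Complex.conj_im, Complex.one_re, Complex.one_im]
        ring
      rw [Complex.zero_re, hre]
      exact quad_aux a₁ a₂ (x 0) (x 1) (x 2) b hp0 hq0 hkey
    · simp only [Complex.zero_im, Complex.mul_im, Complex.add_im, Complex.add_re,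
        Complex.mul_re, Complex.conj_re, Complex.conj_im, Complex.one_re, Complex.one_im]
      ring
end

section
/- Fix 0 < x < 1 and set s = (1 − x)·√x. The 4×4 complex matrix Gr(H_x) with rows (1, x, x, x+is), (x, 1, x−is, x), (x, x+is, 1, x), (x−is, x, x, 1) is positive definite. In particular its leading principal minors are (taking them of sizes 1,2,3,4) 1, (1+x)(1−x), (1+x)(1−x)², and (1+x)²(1−x)⁴, all of which are positive for 0 < x < 1. -/
open scoped ComplexOrder

set_option maxHeartbeats 1000000 in
theorem det_fin_four' {R : Type*} [CommRing R] (M : Matrix (Fin 4) (Fin 4) R) :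
    M.det = M 0 0 * M 1 1 * M 2 2 * M 3 3 - M 0 0 * M 1 1 * M 2 3 * M 3 2
      - M 0 0 * M 1 2 * M 2 1 * M 3 3 + M 0 0 * M 1 2 * M 2 3 * M 3 1
      + M 0 0 * M 1 3 * M 2 1 * M 3 2 - M 0 0 * M 1 3 * M 2 2 * M 3 1
      - M 0 1 * M 1 0 * M 2 2 * M 3 3 + M 0 1 * M 1 0 * M 2 3 * M 3 2
      + M 0 1 * M 1 2 * M 2 0 * M 3 3 - M 0 1 * M 1 2 * M 2 3 * M 3 0
      - M 0 1 * M 1 3 * M 2 0 * M 3 2 + M 0 1 * M 1 3 * M 2 2 * M 3 0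
      + M 0 2 * M 1 0 * M 2 1 * M 3 3 - M 0 2 * M 1 0 * M 2 3 * M 3 1
      - M 0 2 * M 1 1 * M 2 0 * M 3 3 + M 0 2 * M 1 1 * M 2 3 * M 3 0
      + M 0 2 * M 1 3 * M 2 0 * M 3 1 - M 0 2 * M 1 3 * M 2 1 * M 3 0
      - M 0 3 * M 1 0 * M 2 1 * M 3 2 + M 0 3 * M 1 0 * M 2 2 * M 3 1
      + M 0 3 * M 1 1 * M 2 0 * M 3 2 - M 0 3 * M 1 1 * M 2 2 * M 3 0
      - M 0 3 * M 1 2 * M 2 0 * M 3 1 + M 0 3 * M 1 2 * M 2 1 * M 3 0 := by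
  have h1 : (Fin.succ 2 : Fin 4) = 3 := rfl
  have h2 : (Fin.castSucc 2 : Fin 4) = 2 := rfl
  have h3 : ((if (1:Fin 4) < Fin.succ 2 then (1:Fin 4) else 2) : Fin 4) = 1 := rfl
  simp [Matrix.det_succ_row_zero, Fin.sum_univ_succ, Fin.succAbove, h1, h2, h3]
  ring

set_option maxHeartbeats 4000000 in
/-- For `0 < x < 1` and `s = (1-x)√x`, Quiggin's Gram matrix
`Gr(H_x)` is positive definite; its leading principal minors of sizes 1,2,3,4 are
`1`, `(1+x)(1-x)`, `(1+x)(1-x)²`, `(1+x)²(1-x)⁴`, all positive for `0 < x < 1`. -/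
theorem stmt_6 (x : ℝ) (hx0 : 0 < x) (hx1 : x < 1) :
    let s : ℝ := (1 - x) * Real.sqrt x
    let G : Matrix (Fin 4) (Fin 4) ℂ :=
      !![1, (x : ℂ), (x : ℂ), (x : ℂ) + (s : ℂ) * Complex.I;
         (x : ℂ), 1, (x : ℂ) - (s : ℂ) * Complex.I, (x : ℂ);
         (x : ℂ), (x : ℂ) + (s : ℂ) * Complex.I, 1, (x : ℂ);
         (x : ℂ) - (s : ℂ) * Complex.I, (x : ℂ), (x : ℂ), 1]
    G.PosDef ∧
      (G.submatrix (Fin.castLE (by norm_num) : Fin 1 → Fin 4)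
        (Fin.castLE (by norm_num) : Fin 1 → Fin 4)).det = ((1 : ℝ) : ℂ) ∧
      (G.submatrix (Fin.castLE (by norm_num) : Fin 2 → Fin 4)
        (Fin.castLE (by norm_num) : Fin 2 → Fin 4)).det = (((1 + x) * (1 - x) : ℝ) : ℂ) ∧
      (G.submatrix (Fin.castLE (by norm_num) : Fin 3 → Fin 4)
        (Fin.castLE (by norm_num) : Fin 3 → Fin 4)).det = (((1 + x) * (1 - x) ^ 2 : ℝ) : ℂ) ∧
      G.det = (((1 + x) ^ 2 * (1 - x) ^ 4 : ℝ) : ℂ) ∧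
      0 < (1 : ℝ) ∧ 0 < (1 + x) * (1 - x) ∧ 0 < (1 + x) * (1 - x) ^ 2 ∧
        0 < (1 + x) ^ 2 * (1 - x) ^ 4 := by
  intro s G
  have hsr : s ^ 2 = (1 - x) ^ 2 * x := by
    rw [mul_pow, Real.sq_sqrt hx0.le]
  have hs : (s : ℂ) ^ 2 = (1 - (x : ℂ)) ^ 2 * (x : ℂ) := by
    exact_mod_cast congrArg (Complex.ofReal) hsr
  have hI : Complex.I ^ 2 = -1 := Complex.I_sq
  refine ⟨?_, ?_, ?_, ?_, ?_, one_pos, mul_pos (by linarith) (by linarith),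
    mul_pos (by linarith) (pow_pos (by linarith) 2),
    mul_pos (pow_pos (by linarith) 2) (pow_pos (by linarith) 4)⟩
  · -- PosDef
    rw [Matrix.posDef_iff_dotProduct_mulVec]
    constructor
    · -- Hermitian
      show G.conjTranspose = G
      ext i j
      fin_cases i <;> fin_cases j <;>
          simp [G, Matrix.conjTranspose_apply, map_add, map_sub, map_mul,
            Complex.conj_ofReal] <;>
        ring
    · intro z hz
      have e00 : G 0 0 = 1 := rfl
      have e01 : G 0 1 = (x : ℂ) := rfl
      have e02 : G 0 2 = (x : ℂ) := rfl
      have e03 : G 0 3 = (x : ℂ) + (s : ℂ) * Complex.I := rfl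
      have e10 : G 1 0 = (x : ℂ) := rfl
      have e11 : G 1 1 = 1 := rfl
      have e12 : G 1 2 = (x : ℂ) - (s : ℂ) * Complex.I := rfl
      have e13 : G 1 3 = (x : ℂ) := rfl
      have e20 : G 2 0 = (x : ℂ) := rfl
      have e21 : G 2 1 = (x : ℂ) + (s : ℂ) * Complex.I := rfl
      have e22 : G 2 2 = 1 := rfl
      have e23 : G 2 3 = (x : ℂ) := rfl
      have e30 : G 3 0 = (x : ℂ) - (s : ℂ) * Complex.I := rfl
      have e31 : G 3 1 = (x : ℂ) := rfl
      have e32 : G 3 2 = (x : ℂ) := rfl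
      have e33 : G 3 3 = 1 := rfl
      set t : ℝ := Real.sqrt x with htdef
      have ht : t ^ 2 = x := Real.sq_sqrt hx0.le
      have hsd : s = (1 - x) * t := rfl
      have ht0 : 0 ≤ t := Real.sqrt_nonneg x
      have ht1 : t < 1 := by nlinarith [ht, ht0]
      set a := z 0 with hadef; set b := z 1 with hbdef; set c := z 2 with hcdef
      set d := z 3 with hddef
      have hQ : dotProduct (star z) (G.mulVec z) =
          ((x * (a.re + b.re + c.re + d.re) ^ 2 + x * (a.im + b.im + c.im + d.im) ^ 2
        + (1 - x) * ((a.re - t * d.im) ^ 2 + (a.im + t * d.re) ^ 2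
          + (1 - x) * (d.re ^ 2 + d.im ^ 2)
          + (b.re + t * c.im) ^ 2 + (b.im - t * c.re) ^ 2
          + (1 - x) * (c.re ^ 2 + c.im ^ 2)) : ℝ) : ℂ) := by
        simp only [dotProduct, Matrix.mulVec, Fin.sum_univ_four, Pi.star_apply, e00, e01, e02, e03, e10, e11, e12, e13, e20, e21, e22, e23, e30, e31, e32, e33]
        rw [Complex.ext_iff]
        constructor
        · simp only [hsd, Complex.add_re, Complex.add_im, Complex.mul_re, Complex.mul_im,
            Complex.sub_re, Complex.sub_im, Complex.I_re, Complex.I_im, Complex.ofReal_re,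
            Complex.ofReal_im, Complex.one_re, Complex.one_im, Complex.star_def, Complex.conj_re,
            Complex.conj_im]
          linear_combination (-(1 - x) * (c.re ^ 2 + c.im ^ 2 + d.re ^ 2 + d.im ^ 2)) * ht
        · simp only [hsd, Complex.add_re, Complex.add_im, Complex.mul_re, Complex.mul_im,
            Complex.sub_re, Complex.sub_im, Complex.I_re, Complex.I_im, Complex.ofReal_re,
            Complex.ofReal_im, Complex.one_re, Complex.one_im, Complex.star_def, Complex.conj_re,
            Complex.conj_im]
          ring
      rw [hQ, Complex.zero_lt_real]
      clear hQ e00 e01 e02 e03 e10 e11 e12 e13 e20 e21 e22 e23 e30 e31 e32 e33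
      have hS : 0 < a.re ^ 2 + a.im ^ 2 + b.re ^ 2 + b.im ^ 2 + c.re ^ 2 + c.im ^ 2
          + d.re ^ 2 + d.im ^ 2 := by
        by_contra hS'
        push_neg at hS'
        apply hz
        funext i
        fin_cases i
        · show a = 0
          apply Complex.ext <;> simp <;> nlinarith [sq_nonneg a.re, sq_nonneg a.im, sq_nonneg b.re, sq_nonneg b.im,
          sq_nonneg c.re, sq_nonneg c.im, sq_nonneg d.re, sq_nonneg d.im]
        · show b = 0
          apply Complex.ext <;> simp <;> nlinarith [sq_nonneg a.re, sq_nonneg a.im, sq_nonneg b.re, sq_nonneg b.im,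
          sq_nonneg c.re, sq_nonneg c.im, sq_nonneg d.re, sq_nonneg d.im]
        · show c = 0
          apply Complex.ext <;> simp <;> nlinarith [sq_nonneg a.re, sq_nonneg a.im, sq_nonneg b.re, sq_nonneg b.im,
          sq_nonneg c.re, sq_nonneg c.im, sq_nonneg d.re, sq_nonneg d.im]
        · show d = 0
          apply Complex.ext <;> simp <;> nlinarith [sq_nonneg a.re, sq_nonneg a.im, sq_nonneg b.re, sq_nonneg b.im,
          sq_nonneg c.re, sq_nonneg c.im, sq_nonneg d.re, sq_nonneg d.im]
      have key : x * (a.re + b.re + c.re + d.re) ^ 2 + x * (a.im + b.im + c.im + d.im) ^ 2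
        + (1 - x) * ((a.re - t * d.im) ^ 2 + (a.im + t * d.re) ^ 2
          + (1 - x) * (d.re ^ 2 + d.im ^ 2)
          + (b.re + t * c.im) ^ 2 + (b.im - t * c.re) ^ 2 + (1 - x) * (c.re ^ 2 + c.im ^ 2))
        = x * (a.re + b.re + c.re + d.re) ^ 2 + x * (a.im + b.im + c.im + d.im) ^ 2
          + (1 - x) * (1 - t) * (a.re ^ 2 + a.im ^ 2 + b.re ^ 2 + b.im ^ 2 + c.re ^ 2 + c.im ^ 2
            + d.re ^ 2 + d.im ^ 2)
          + (1 - x) * t * ((a.re - d.im) ^ 2 + (a.im + d.re) ^ 2 + (b.re + c.im) ^ 2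
            + (b.im - c.re) ^ 2) := by
        linear_combination ((1 - x) * (d.re ^ 2 + d.im ^ 2 + c.re ^ 2 + c.im ^ 2)) * ht
      rw [key]
      have h1 : 0 ≤ x * (a.re + b.re + c.re + d.re) ^ 2 := by positivity
      have h2 : 0 ≤ x * (a.im + b.im + c.im + d.im) ^ 2 := by positivity
      have h3 : 0 < (1 - x) * (1 - t) * (a.re ^ 2 + a.im ^ 2 + b.re ^ 2 + b.im ^ 2 + c.re ^ 2
          + c.im ^ 2 + d.re ^ 2 + d.im ^ 2) :=
        mul_pos (mul_pos (by linarith) (by linarith)) hS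
      have h4 : 0 ≤ (1 - x) * t * ((a.re - d.im) ^ 2 + (a.im + d.re) ^ 2 + (b.re + c.im) ^ 2
          + (b.im - c.re) ^ 2) :=
        mul_nonneg (mul_nonneg (by linarith) ht0) (by positivity)
      linarith
  · -- 1x1 minor
    rw [Matrix.det_fin_one]
    show (1 : ℂ) = _
    norm_num
  · -- 2x2 minor
    rw [Matrix.det_fin_two]
    show (1 : ℂ) * 1 - (x : ℂ) * (x : ℂ) = _
    push_cast
    ring
  · -- 3x3 minor
    rw [Matrix.det_fin_three]
    show (1 : ℂ) * 1 * 1 - 1 * ((x : ℂ) - (s : ℂ) * Complex.I) * ((x : ℂ) + (s : ℂ) * Complex.I)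
        - (x : ℂ) * (x : ℂ) * 1 + (x : ℂ) * ((x : ℂ) - (s : ℂ) * Complex.I) * (x : ℂ)
        + (x : ℂ) * (x : ℂ) * ((x : ℂ) + (s : ℂ) * Complex.I) - (x : ℂ) * 1 * (x : ℂ) = _
    push_cast
    linear_combination (s : ℂ) ^ 2 * hI - hs
  · -- 4x4 determinant
    have e00 : G 0 0 = 1 := rfl
    have e01 : G 0 1 = (x : ℂ) := rfl
    have e02 : G 0 2 = (x : ℂ) := rfl
    have e03 : G 0 3 = (x : ℂ) + (s : ℂ) * Complex.I := rfl
    have e10 : G 1 0 = (x : ℂ) := rfl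
    have e11 : G 1 1 = 1 := rfl
    have e12 : G 1 2 = (x : ℂ) - (s : ℂ) * Complex.I := rfl
    have e13 : G 1 3 = (x : ℂ) := rfl
    have e20 : G 2 0 = (x : ℂ) := rfl
    have e21 : G 2 1 = (x : ℂ) + (s : ℂ) * Complex.I := rfl
    have e22 : G 2 2 = 1 := rfl
    have e23 : G 2 3 = (x : ℂ) := rfl
    have e30 : G 3 0 = (x : ℂ) - (s : ℂ) * Complex.I := rfl
    have e31 : G 3 1 = (x : ℂ) := rfl
    have e32 : G 3 2 = (x : ℂ) := rfl
    have e33 : G 3 3 = 1 := rfl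
    rw [det_fin_four']
    simp only [e00, e01, e02, e03, e10, e11, e12, e13, e20, e21, e22, e23, e30, e31, e32, e33]
    push_cast
    linear_combination (2 * (x : ℂ) ^ 2 - 2 + (s : ℂ) ^ 2 + ((x : ℂ) - 2 * (x : ℂ) ^ 2
        + (x : ℂ) ^ 3)) * hs
      + (2 * (s : ℂ) ^ 2 - 2 * (x : ℂ) ^ 2 * (s : ℂ) ^ 2 - 2 * (s : ℂ) ^ 4
        + (s : ℂ) ^ 4 * (Complex.I ^ 2 + 1)) * hI
end

section
/- Fix 0 < x < 1 and set s = (1 − x)·√x. Let MQ be the 3×3 complex matrix with rows (1−x², 1 − x²/(x−is), 1−x−is), (1 − x²/(x+is), 1−x², 1−x−is), (1−x+is, 1−x+is, (1−x)(1+x²)). Then det MQ = −x³(x+1)²(x−1)⁴/(x²−x+1); in particular det MQ < 0, and MQ is not positive semidefinite. -/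
open scoped ComplexOrder

/-- For `0 < x < 1` and `s = (1-x)√x`, the matrix `MQ(H_x,1)` of Quiggin's
example has determinant `−x³(x+1)²(x−1)⁴/(x²−x+1) < 0`, hence is not positive semidefinite. -/
theorem stmt_7 (x : ℝ) (hx0 : 0 < x) (hx1 : x < 1) :
    let s : ℝ := (1 - x) * Real.sqrt x
    let MQ : Matrix (Fin 3) (Fin 3) ℂ :=
      !![1 - (x : ℂ) ^ 2, 1 - (x : ℂ) ^ 2 / ((x : ℂ) - (s : ℂ) * Complex.I),
           1 - (x : ℂ) - (s : ℂ) * Complex.I;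
         1 - (x : ℂ) ^ 2 / ((x : ℂ) + (s : ℂ) * Complex.I), 1 - (x : ℂ) ^ 2,
           1 - (x : ℂ) - (s : ℂ) * Complex.I;
         1 - (x : ℂ) + (s : ℂ) * Complex.I, 1 - (x : ℂ) + (s : ℂ) * Complex.I,
           (1 - (x : ℂ)) * (1 + (x : ℂ) ^ 2)]
    MQ.det = ((-(x ^ 3 * (x + 1) ^ 2 * (x - 1) ^ 4 / (x ^ 2 - x + 1)) : ℝ) : ℂ) ∧
      (-(x ^ 3 * (x + 1) ^ 2 * (x - 1) ^ 4 / (x ^ 2 - x + 1)) : ℝ) < 0 ∧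
      ¬ MQ.PosSemidef := by
  intro s MQ
  set u : ℂ := (s : ℂ) * Complex.I with hu
  have hs2 : (s : ℝ) ^ 2 = (1 - x) ^ 2 * x := by
    simp only [s, mul_pow, Real.sq_sqrt hx0.le]
  have hu2 : u ^ 2 = -((1 - (x : ℂ)) ^ 2 * (x : ℂ)) := by
    rw [hu, mul_pow, Complex.I_sq, ← Complex.ofReal_pow, hs2]
    push_cast; ring
  have h1 : (x : ℂ) - u ≠ 0 := by
    intro h
    have : ((x : ℂ) - u).re = 0 := by rw [h]; simp
    simp [hu, Complex.sub_re, Complex.ofReal_re] at this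
    exact hx0.ne' this
  have h2 : (x : ℂ) + u ≠ 0 := by
    intro h
    have : ((x : ℂ) + u).re = 0 := by rw [h]; simp
    simp [hu, Complex.add_re, Complex.ofReal_re] at this
    exact hx0.ne' this
  have hq : (x : ℝ) ^ 2 - x + 1 ≠ 0 := by nlinarith
  have hqC : ((x : ℂ)) ^ 2 - (x : ℂ) + 1 ≠ 0 := by
    intro h
    exact hq (by exact_mod_cast h)
  have hdet : MQ.det = ((-(x ^ 3 * (x + 1) ^ 2 * (x - 1) ^ 4 / (x ^ 2 - x + 1)) : ℝ) : ℂ) := by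
    show (!![1 - (x : ℂ) ^ 2, 1 - (x : ℂ) ^ 2 / ((x : ℂ) - u),
           1 - (x : ℂ) - u;
         1 - (x : ℂ) ^ 2 / ((x : ℂ) + u), 1 - (x : ℂ) ^ 2,
           1 - (x : ℂ) - u;
         1 - (x : ℂ) + u, 1 - (x : ℂ) + u,
           (1 - (x : ℂ)) * (1 + (x : ℂ) ^ 2)] : Matrix (Fin 3) (Fin 3) ℂ).det = _
    rw [Matrix.det_fin_three]
    simp only [Matrix.of_apply, Matrix.cons_val, Matrix.cons_val_zero, Matrix.cons_val_one]
    push_cast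
    clear hu2
    have hu2 : u ^ 2 = -((1 - (x : ℂ)) ^ 2 * (x : ℂ)) := by
      rw [hu, mul_pow, Complex.I_sq, ← Complex.ofReal_pow, hs2]
      push_cast; ring
    clear hu hs2 h1 h2
    have h1 : (x : ℂ) - u ≠ 0 := by
      intro h
      have h0 : u ^ 2 = (x:ℂ)^2 := by rw [show u = (x:ℂ) by linear_combination -h]
      rw [hu2] at h0
      have h0' : ((x * ((1-x)^2 + x) : ℝ) : ℂ) = 0 := by push_cast; linear_combination -h0
      have : (x:ℝ) * ((1-x)^2 + x) = 0 := by exact_mod_cast h0'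
      have hx : (0:ℝ) < x * ((1-x)^2 + x) := by positivity
      linarith
    have h2 : (x : ℂ) + u ≠ 0 := by
      intro h
      have h0 : u ^ 2 = (x:ℂ)^2 := by rw [show u = -(x:ℂ) by linear_combination h]; ring
      rw [hu2] at h0
      have h0' : ((x * ((1-x)^2 + x) : ℝ) : ℂ) = 0 := by push_cast; linear_combination -h0
      have : (x:ℝ) * ((1-x)^2 + x) = 0 := by exact_mod_cast h0'
      have hx : (0:ℝ) < x * ((1-x)^2 + x) := by positivity
      linarith
    clear_value u
    have hu3 : u ^ 3 = -((1 - (x : ℂ)) ^ 2 * (x : ℂ)) * u := by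
      rw [pow_succ, hu2]
    have hu4 : u ^ 4 = ((1 - (x : ℂ)) ^ 2 * (x : ℂ)) ^ 2 := by
      rw [show (4:ℕ) = 2*2 by rfl, pow_mul, hu2]; ring
    have hu5 : u ^ 5 = ((1 - (x : ℂ)) ^ 2 * (x : ℂ)) ^ 2 * u := by
      rw [pow_succ, hu4]
    have hu6 : u ^ 6 = -((1 - (x : ℂ)) ^ 2 * (x : ℂ)) ^ 3 := by
      rw [show (6:ℕ) = 2*3 by rfl, pow_mul, hu2]; ring
    have hqC' : 1 - (x : ℂ) + (x : ℂ) ^ 2 ≠ 0 := by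
      rw [show 1 - (x : ℂ) + (x : ℂ) ^ 2 = (x : ℂ) ^ 2 - (x : ℂ) + 1 by ring]; exact hqC
    field_simp
    ring_nf
    simp only [hu6, hu5, hu4, hu3, hu2]
    field_simp
    ring
  refine ⟨hdet, ?_, ?_⟩
  · have hnum : 0 < x ^ 3 * (x + 1) ^ 2 * (x - 1) ^ 4 := by
      have h4 : (x - 1) ^ 4 = (1 - x) ^ 4 := by ring
      rw [h4]
      exact mul_pos (mul_pos (pow_pos hx0 3) (pow_pos (by linarith) 2)) (pow_pos (by linarith) 4)
    have hden : 0 < x ^ 2 - x + 1 := by nlinarith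
    have := div_pos hnum hden
    linarith
  · intro hPSD
    have hge : (0 : ℂ) ≤ MQ.det := by
      rw [hPSD.isHermitian.det_eq_prod_eigenvalues]
      apply Finset.prod_nonneg
      intro i _
      exact Complex.zero_le_real.2 (hPSD.eigenvalues_nonneg i)
    rw [hdet] at hge
    have : (0:ℝ) ≤ -(x ^ 3 * (x + 1) ^ 2 * (x - 1) ^ 4 / (x ^ 2 - x + 1)) := by
      exact_mod_cast Complex.zero_le_real.mp (by exact_mod_cast hge)
    have hnum : 0 < x ^ 3 * (x + 1) ^ 2 * (x - 1) ^ 4 := by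
      have h4 : (x - 1) ^ 4 = (1 - x) ^ 4 := by ring
      rw [h4]
      exact mul_pos (mul_pos (pow_pos hx0 3) (pow_pos (by linarith) 2)) (pow_pos (by linarith) 4)
    have hden : 0 < x ^ 2 - x + 1 := by nlinarith
    have := div_pos hnum hden
    linarith
end

section
/- Fix 0 < x < 1 and set s = (1 − x)·√x. Let MQ be the 3×3 complex matrix with rows (1−x², 1 − x²/(x−is), 1−x−is), (1 − x²/(x+is), 1−x², 1−x−is), (1−x+is, 1−x+is, (1−x)(1+x²)). Then each of the three 2×2 principal submatrices of MQ (obtained by deleting the j-th row and j-th column, j = 1, 2, 3) is positive semidefinite; the submatrices obtained by deleting the first row and column and by deleting the second row and column each have determinant x²(x+1)(x−1)². -/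
open scoped ComplexOrder
open Complex Matrix

lemma psd_two (a d r : ℝ) (b : ℂ) (ha : 0 < a) (hr : r ≤ a * d)
    (hb : b * (starRingEnd ℂ) b = (r : ℂ)) :
    (!![(a : ℂ), b; (starRingEnd ℂ) b, (d : ℂ)]).PosSemidef := by
  have hb' : Complex.normSq b = r := by
    rw [Complex.mul_conj] at hb; exact_mod_cast hb
  have hr0 : 0 ≤ r := hb' ▸ Complex.normSq_nonneg b
  set e : ℝ := Real.sqrt a with he
  set f : ℝ := Real.sqrt ((a * d - r) / a) with hf
  have he0 : 0 < e := Real.sqrt_pos.2 ha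
  have he2 : e * e = a := Real.mul_self_sqrt ha.le
  have hf2 : f * f = (a * d - r) / a :=
    Real.mul_self_sqrt (div_nonneg (by linarith) ha.le)
  have heC : ((e : ℂ)) ≠ 0 := by exact_mod_cast he0.ne'
  have key : !![(a : ℂ), b; (starRingEnd ℂ) b, (d : ℂ)] =
      (!![(e : ℂ), b / (e:ℂ); 0, (f : ℂ)])ᴴ * !![(e : ℂ), b / (e:ℂ); 0, (f : ℂ)] := by
    rw [show (!![(e : ℂ), b / (e:ℂ); 0, (f : ℂ)])ᴴ =
        !![(e : ℂ), 0; (starRingEnd ℂ) (b / (e:ℂ)), (f : ℂ)] by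
      ext i j; fin_cases i <;> fin_cases j <;>
        simp [Matrix.conjTranspose_apply, Complex.conj_ofReal]]
    rw [Matrix.mul_fin_two]
    have hbc : (starRingEnd ℂ) b * b = (r : ℂ) := by rw [mul_comm]; exact hb
    ext i j
    fin_cases i <;> fin_cases j
    · show (a : ℂ) = (e:ℂ) * e + 0 * 0
      push_cast [← he2]; ring
    · show b = (e:ℂ) * (b / e) + 0 * f
      field_simp; ring
    · show (starRingEnd ℂ) b = (starRingEnd ℂ) (b / (e:ℂ)) * e + (f:ℂ) * 0
      rw [map_div₀]
      simp [Complex.conj_ofReal]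
      field_simp
    · show (d : ℂ) = (starRingEnd ℂ) (b / (e:ℂ)) * (b / e) + (f:ℂ) * f
      rw [map_div₀]
      simp only [Complex.conj_ofReal]
      rw [div_mul_div_comm, hbc]
      have h1 : ((e:ℂ)) * e = (a : ℂ) := by exact_mod_cast congrArg Complex.ofReal he2
      rw [h1]
      have hR : d = r / a + f * f := by
        rw [hf2]; field_simp; ring
      exact_mod_cast congrArg Complex.ofReal hR
  rw [key]
  exact Matrix.posSemidef_conjTranspose_mul_self _

/-- For `0 < x < 1` and `s = (1-x)√x`, each of the three `2×2` principal
submatrices of the matrix `MQ(H_x,1)` of Quiggin's example is positive semidefinite; the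
ones obtained by deleting the first, resp. second, row and column have determinant
`x²(x+1)(x−1)²`. -/
theorem stmt_8 (x : ℝ) (hx0 : 0 < x) (hx1 : x < 1) :
    let s : ℝ := (1 - x) * Real.sqrt x
    let MQ : Matrix (Fin 3) (Fin 3) ℂ :=
      !![1 - (x : ℂ) ^ 2, 1 - (x : ℂ) ^ 2 / ((x : ℂ) - (s : ℂ) * Complex.I),
           1 - (x : ℂ) - (s : ℂ) * Complex.I;
         1 - (x : ℂ) ^ 2 / ((x : ℂ) + (s : ℂ) * Complex.I), 1 - (x : ℂ) ^ 2,
           1 - (x : ℂ) - (s : ℂ) * Complex.I;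
         1 - (x : ℂ) + (s : ℂ) * Complex.I, 1 - (x : ℂ) + (s : ℂ) * Complex.I,
           (1 - (x : ℂ)) * (1 + (x : ℂ) ^ 2)]
    let A₁ : Matrix (Fin 2) (Fin 2) ℂ := !![MQ 1 1, MQ 1 2; MQ 2 1, MQ 2 2]
    let A₂ : Matrix (Fin 2) (Fin 2) ℂ := !![MQ 0 0, MQ 0 2; MQ 2 0, MQ 2 2]
    let A₃ : Matrix (Fin 2) (Fin 2) ℂ := !![MQ 0 0, MQ 0 1; MQ 1 0, MQ 1 1]
    A₁.PosSemidef ∧ A₂.PosSemidef ∧ A₃.PosSemidef ∧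
      A₁.det = ((x ^ 2 * (x + 1) * (x - 1) ^ 2 : ℝ) : ℂ) ∧
      A₂.det = ((x ^ 2 * (x + 1) * (x - 1) ^ 2 : ℝ) : ℂ) := by
  intro s MQ A₁ A₂ A₃
  have hs2 : s ^ 2 = (1 - x) ^ 2 * x := by
    rw [mul_pow, Real.sq_sqrt hx0.le]
  have hs2c : ((s:ℂ)) ^ 2 = (1 - (x:ℂ)) ^ 2 * x := by exact_mod_cast congrArg Complex.ofReal hs2
  have hI : (Complex.I) ^ 2 = -1 := Complex.I_sq
  -- the common matrix for A₁ and A₂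
  have hA12 : A₁ = A₂ := rfl
  have hb1conj : (starRingEnd ℂ) (1 - (x : ℂ) - (s : ℂ) * Complex.I)
      = 1 - (x : ℂ) + (s : ℂ) * Complex.I := by
    simp [map_sub, Complex.conj_ofReal, sub_add_eq_add_sub]
  have hA1 : A₁ = !![(((1 - x ^ 2 : ℝ)) : ℂ), 1 - (x : ℂ) - (s : ℂ) * Complex.I;
      (starRingEnd ℂ) (1 - (x : ℂ) - (s : ℂ) * Complex.I), (((1 - x) * (1 + x ^ 2) : ℝ) : ℂ)] := by
    rw [hb1conj]
    show (!![MQ 1 1, MQ 1 2; MQ 2 1, MQ 2 2] : Matrix (Fin 2) (Fin 2) ℂ) = _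
    simp [MQ]
  have hP1 : A₁.PosSemidef := by
    rw [hA1]
    apply psd_two _ _ ((1 - x) ^ 2 * (1 + x)) _ (by nlinarith) (by nlinarith)
    rw [hb1conj]
    push_cast
    linear_combination (-(s:ℂ)^2) * hI + hs2c
  -- A₃
  have hd0 : ((x:ℂ) - (s:ℂ) * Complex.I) ≠ 0 := by
    intro h
    have := congrArg Complex.re h
    simp at this
    linarith
  have hd0' : ((x:ℂ) + (s:ℂ) * Complex.I) ≠ 0 := by
    intro h
    have := congrArg Complex.re h
    simp at this
    linarith
  have hb3conj : (starRingEnd ℂ) (1 - (x : ℂ) ^ 2 / ((x : ℂ) - (s : ℂ) * Complex.I))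
      = 1 - (x : ℂ) ^ 2 / ((x : ℂ) + (s : ℂ) * Complex.I) := by
    rw [map_sub, _root_.map_one, map_div₀, map_sub, map_pow]
    simp [Complex.conj_ofReal]
  have hq : x ^ 2 - x + 1 > 0 := by nlinarith
  have hA3 : A₃ = !![(((1 - x ^ 2 : ℝ)) : ℂ), 1 - (x : ℂ) ^ 2 / ((x : ℂ) - (s : ℂ) * Complex.I);
      (starRingEnd ℂ) (1 - (x : ℂ) ^ 2 / ((x : ℂ) - (s : ℂ) * Complex.I)), (((1 - x ^ 2 : ℝ)) : ℂ)] := by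
    rw [hb3conj]
    show (!![MQ 0 0, MQ 0 1; MQ 1 0, MQ 1 1] : Matrix (Fin 2) (Fin 2) ℂ) = _
    simp [MQ]
  have hP3 : A₃.PosSemidef := by
    rw [hA3]
    apply psd_two _ _ ((1 - x) ^ 2 * (1 + x) / (x ^ 2 - x + 1)) _ (by nlinarith)
    · rw [div_le_iff₀ hq]
      nlinarith [mul_nonneg (mul_nonneg (sq_nonneg (1-x)) (by linarith : (0:ℝ) ≤ 1+x)) (pow_nonneg hx0.le 3)]
    · rw [hb3conj]
      have hqc : ((x:ℂ)^2 - x + 1) ≠ 0 := by exact_mod_cast hq.ne'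
      have ht : ((s:ℂ) * Complex.I)^2 = -((1 - (x:ℂ))^2 * x) := by
        rw [mul_pow, hI, hs2c]; ring
      push_cast
      field_simp
      rw [eq_div_iff (by rw [show (x:ℂ)*(x-1)+1 = x^2-x+1 by ring]; exact hqc)]
      linear_combination ((x:ℂ)^3 - 2*(x:ℂ)^2) * ht
  -- determinant
  have hdet : A₁.det = ((x ^ 2 * (x + 1) * (x - 1) ^ 2 : ℝ) : ℂ) := by
    rw [hA1, Matrix.det_fin_two_of, hb1conj]
    push_cast
    linear_combination ((s:ℂ)^2) * hI - hs2c
  exact ⟨hP1, hA12 ▸ hP1, hP3, hdet, hA12 ▸ hdet⟩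
end

section
/- Let A, B, C ∈ (0, π) be real numbers with (cos A + cos B·cos C)² ≤ (1 − cos²B)(1 − cos²C). Then π ≤ A + B + C. -/
/-- For `A B C ∈ (0, π)` with
`(cos A + cos B cos C)² ≤ (1 − cos²B)(1 − cos²C)`, one has `π ≤ A + B + C`
(the angle-sum condition for good dihedral angles). -/
theorem stmt_14 (A B C : ℝ) (hA : A ∈ Set.Ioo 0 Real.pi)
    (hB : B ∈ Set.Ioo 0 Real.pi) (hC : C ∈ Set.Ioo 0 Real.pi)
    (h : (Real.cos A + Real.cos B * Real.cos C) ^ 2 ≤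
      (1 - Real.cos B ^ 2) * (1 - Real.cos C ^ 2)) :
    Real.pi ≤ A + B + C := by
  obtain ⟨hA0, hAπ⟩ := hA
  obtain ⟨hB0, hBπ⟩ := hB
  obtain ⟨hC0, hCπ⟩ := hC
  by_cases hBC : Real.pi ≤ B + C
  · linarith
  push_neg at hBC
  have hsB : 0 < Real.sin B := Real.sin_pos_of_pos_of_lt_pi hB0 hBπ
  have hsC : 0 < Real.sin C := Real.sin_pos_of_pos_of_lt_pi hC0 hCπ
  have hB2 : Real.sin B ^ 2 = 1 - Real.cos B ^ 2 := Real.sin_sq B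
  have hC2 : Real.sin C ^ 2 = 1 - Real.cos C ^ 2 := Real.sin_sq C
  have hkey : Real.cos A ≤ Real.sin B * Real.sin C - Real.cos B * Real.cos C := by
    nlinarith [mul_pos hsB hsC]
  have hcos : Real.cos A ≤ Real.cos (Real.pi - (B + C)) := by
    rw [Real.cos_pi_sub, Real.cos_add]
    linarith
  have hmem1 : Real.pi - (B + C) ∈ Set.Icc 0 Real.pi := ⟨by linarith, by linarith⟩
  have hmem2 : A ∈ Set.Icc 0 Real.pi := ⟨le_of_lt hA0, le_of_lt hAπ⟩
  have := (Real.strictAntiOn_cos.le_iff_ge hmem2 hmem1).mp hcos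
  linarith
end

section
/- Let x₁, x₂, x₃ ∈ ℂ be such that 1 − x_a·conj(x_b) ≠ 0 for all a, b ∈ {1,2,3}. Define k_{ab} = (1 − x_a·conj(x_b))⁻¹ and, for a triple (a,b,c), κ_{abc} = ((x_a − x_b)/(1 − x_a·conj(x_b)))·conj((x_a − x_c)/(1 − x_a·conj(x_c))). Then κ₁₂₃·κ₂₃₁·κ₃₁₂ = −|x₁ − x₂|²·|x₂ − x₃|²·|x₃ − x₁|²·(k₁₂·k₂₃·k₃₁)². -/
set_option maxHeartbeats 1000000 in
/-- For `x₁ x₂ x₃ : ℂ` with `1 − x_a · conj x_b ≠ 0` for all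
`a, b ∈ {x₁, x₂, x₃}`, setting `k_{ab} = (1 − x_a conj x_b)⁻¹` and
`κ_{abc} = ((x_a − x_b)/(1 − x_a conj x_b)) · conj((x_a − x_c)/(1 − x_a conj x_c))`, one has
`κ₁₂₃ κ₂₃₁ κ₃₁₂ = −|x₁−x₂|²|x₂−x₃|²|x₃−x₁|² (k₁₂ k₂₃ k₃₁)²`. -/
theorem stmt_16 (x₁ x₂ x₃ : ℂ)
    (h : ∀ a ∈ ({x₁, x₂, x₃} : Set ℂ), ∀ b ∈ ({x₁, x₂, x₃} : Set ℂ),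
      1 - a * (starRingEnd ℂ) b ≠ 0) :
    let k : ℂ → ℂ → ℂ := fun a b => (1 - a * (starRingEnd ℂ) b)⁻¹
    let κ : ℂ → ℂ → ℂ → ℂ := fun a b c =>
      ((a - b) / (1 - a * (starRingEnd ℂ) b)) *
        (starRingEnd ℂ) ((a - c) / (1 - a * (starRingEnd ℂ) c))
    κ x₁ x₂ x₃ * κ x₂ x₃ x₁ * κ x₃ x₁ x₂ =
      -((‖x₁ - x₂‖ ^ 2 * ‖x₂ - x₃‖ ^ 2
          * ‖x₃ - x₁‖ ^ 2 : ℝ) : ℂ) * (k x₁ x₂ * k x₂ x₃ * k x₃ x₁) ^ 2 := by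
  intro k κ
  have m1 : x₁ ∈ ({x₁, x₂, x₃} : Set ℂ) := by simp
  have m2 : x₂ ∈ ({x₁, x₂, x₃} : Set ℂ) := by simp
  have m3 : x₃ ∈ ({x₁, x₂, x₃} : Set ℂ) := by simp
  have h12 := h x₁ m1 x₂ m2
  have h23 := h x₂ m2 x₃ m3
  have h31 := h x₃ m3 x₁ m1
  have h13 := h x₁ m1 x₃ m3
  have h21 := h x₂ m2 x₁ m1
  have h32 := h x₃ m3 x₂ m2
  have c13 : 1 - (starRingEnd ℂ) x₁ * x₃ ≠ 0 := by
    intro e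
    apply h13
    have := congrArg (starRingEnd ℂ) e
    simpa [mul_comm] using this
  have c21 : 1 - (starRingEnd ℂ) x₂ * x₁ ≠ 0 := by
    intro e
    apply h21
    have := congrArg (starRingEnd ℂ) e
    simpa [mul_comm] using this
  have c32 : 1 - (starRingEnd ℂ) x₃ * x₂ ≠ 0 := by
    intro e
    apply h32
    have := congrArg (starRingEnd ℂ) e
    simpa [mul_comm] using this
  have habs : ((‖x₁ - x₂‖ ^ 2 * ‖x₂ - x₃‖ ^ 2
          * ‖x₃ - x₁‖ ^ 2 : ℝ) : ℂ)
      = ((x₁ - x₂) * (starRingEnd ℂ) (x₁ - x₂)) * ((x₂ - x₃) * (starRingEnd ℂ) (x₂ - x₃))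
        * ((x₃ - x₁) * (starRingEnd ℂ) (x₃ - x₁)) := by
    rw [Complex.mul_conj, Complex.mul_conj, Complex.mul_conj]
    norm_cast
    simp [← Complex.sq_norm]
  simp only [k, κ, map_div₀, map_sub, map_mul, map_one, Complex.conj_conj, habs,
    div_mul_div_comm]
  rw [← mul_inv, ← mul_inv, inv_pow, ← div_eq_mul_inv, div_eq_div_iff]
  · ring
  · exact mul_ne_zero (mul_ne_zero (mul_ne_zero h12 c13) (mul_ne_zero h23 c21))
      (mul_ne_zero h31 c32)
  · exact pow_ne_zero _ (mul_ne_zero (mul_ne_zero h12 h23) h31)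
end

section
/- Let x₁, x₂, x₃ be distinct points of the open unit disc in ℂ. With k_{ab} = (1 − x_a·conj(x_b))⁻¹ and κ_{abc} = ((x_a − x_b)/(1 − x_a·conj(x_b)))·conj((x_a − x_c)/(1 − x_a·conj(x_c))), one has, as angles modulo 2π, π − arg(κ₁₂₃·κ₂₃₁·κ₃₁₂) ≡ −2·arg(k₁₂·k₂₃·k₃₁) (mod 2π). -/
set_option maxHeartbeats 1000000

private lemma one_sub_ne (a b : ℂ) (ha : ‖a‖ < 1) (hb : ‖b‖ < 1) :
    1 - a * (starRingEnd ℂ) b ≠ 0 := by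
  intro h
  have hab : a * (starRingEnd ℂ) b = 1 := by linear_combination -h
  have := congrArg (‖·‖) hab
  rw [norm_mul, Complex.norm_conj, norm_one] at this
  nlinarith [norm_nonneg a, norm_nonneg b]

/-- For distinct points `x₁ x₂ x₃` of the open unit disc, with
`k_{ab} = (1 − x_a conj x_b)⁻¹` and
`κ_{abc} = ((x_a − x_b)/(1 − x_a conj x_b)) · conj((x_a − x_c)/(1 − x_a conj x_c))`, one has,
modulo `2π`, `π − arg(κ₁₂₃ κ₂₃₁ κ₃₁₂) ≡ −2 arg(k₁₂ k₂₃ k₃₁)`. -/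
theorem stmt_17 (x₁ x₂ x₃ : ℂ)
    (h₁ : ‖x₁‖ < 1) (h₂ : ‖x₂‖ < 1) (h₃ : ‖x₃‖ < 1)
    (h₁₂ : x₁ ≠ x₂) (h₁₃ : x₁ ≠ x₃) (h₂₃ : x₂ ≠ x₃) :
    let k : ℂ → ℂ → ℂ := fun a b => (1 - a * (starRingEnd ℂ) b)⁻¹
    let κ : ℂ → ℂ → ℂ → ℂ := fun a b c =>
      ((a - b) / (1 - a * (starRingEnd ℂ) b)) *
        (starRingEnd ℂ) ((a - c) / (1 - a * (starRingEnd ℂ) c))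
    ((Real.pi - (κ x₁ x₂ x₃ * κ x₂ x₃ x₁ * κ x₃ x₁ x₂).arg : ℝ) : Real.Angle) =
      ((-2 * (k x₁ x₂ * k x₂ x₃ * k x₃ x₁).arg : ℝ) : Real.Angle) := by
  intro k κ
  have d12 := one_sub_ne x₁ x₂ h₁ h₂
  have d23 := one_sub_ne x₂ x₃ h₂ h₃
  have d31 := one_sub_ne x₃ x₁ h₃ h₁
  have d21 := one_sub_ne x₂ x₁ h₂ h₁
  have d13 := one_sub_ne x₁ x₃ h₁ h₃
  have d32 := one_sub_ne x₃ x₂ h₃ h₂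
  set s : ℂ := (x₁ - x₂) * (x₂ - x₃) * (x₃ - x₁) with hs
  set D : ℂ := (1 - x₁ * (starRingEnd ℂ) x₂) * (1 - x₂ * (starRingEnd ℂ) x₃) *
      (1 - x₃ * (starRingEnd ℂ) x₁) with hD
  have hDne : D ≠ 0 := mul_ne_zero (mul_ne_zero d12 d23) d31
  have hsne : s ≠ 0 := by
    refine mul_ne_zero (mul_ne_zero ?_ ?_) ?_ <;> rw [sub_ne_zero]
    · exact h₁₂
    · exact h₂₃
    · exact fun h => h₁₃ h.symm
  have hk : k x₁ x₂ * k x₂ x₃ * k x₃ x₁ = D⁻¹ := by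
    simp only [k, hD, mul_inv]
  have c12 : 1 - (starRingEnd ℂ) x₁ * x₂ ≠ 0 := by rw [mul_comm]; exact d21
  have c23 : 1 - (starRingEnd ℂ) x₂ * x₃ ≠ 0 := by rw [mul_comm]; exact d32
  have c31 : 1 - (starRingEnd ℂ) x₃ * x₁ ≠ 0 := by rw [mul_comm]; exact d13
  have c13 : 1 - (starRingEnd ℂ) x₁ * x₃ ≠ 0 := by rw [mul_comm]; exact d31
  have c21 : 1 - (starRingEnd ℂ) x₂ * x₁ ≠ 0 := by rw [mul_comm]; exact d12
  have c32 : 1 - (starRingEnd ℂ) x₃ * x₂ ≠ 0 := by rw [mul_comm]; exact d23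
  have hκ : κ x₁ x₂ x₃ * κ x₂ x₃ x₁ * κ x₃ x₁ x₂ = -(s * (starRingEnd ℂ) s) * (D ^ 2)⁻¹ := by
    simp only [κ, hs, hD, map_div₀, map_sub, map_mul, map_one, Complex.conj_conj]
    field_simp
    ring
  have hssnn : (0:ℝ) ≤ Complex.normSq s := Complex.normSq_nonneg s
  have hss : s * (starRingEnd ℂ) s = (Complex.normSq s : ℂ) := Complex.mul_conj s
  have hssne : (Complex.normSq s : ℂ) ≠ 0 :=
    Complex.ofReal_ne_zero.mpr (ne_of_gt (Complex.normSq_pos.mpr hsne))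
  -- arg of the κ product as an angle
  have hargκ : ((κ x₁ x₂ x₃ * κ x₂ x₃ x₁ * κ x₃ x₁ x₂).arg : Real.Angle) =
      (Real.pi : Real.Angle) - (D.arg : Real.Angle) - (D.arg : Real.Angle) := by
    rw [hκ, hss]
    rw [Complex.arg_mul_coe_angle (neg_ne_zero.2 hssne)
      (inv_ne_zero (pow_ne_zero 2 hDne))]
    rw [Complex.arg_neg_coe_angle hssne, Complex.arg_inv_coe_angle]
    rw [Complex.arg_ofReal_of_nonneg hssnn]
    rw [show (D:ℂ) ^ 2 = D * D by ring, Complex.arg_mul_coe_angle hDne hDne]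
    rw [Real.Angle.coe_zero]
    abel
  have hargk : (((k x₁ x₂ * k x₂ x₃ * k x₃ x₁).arg : ℝ) : Real.Angle) =
      -(D.arg : Real.Angle) := by
    rw [hk, Complex.arg_inv_coe_angle]
  calc ((Real.pi - (κ x₁ x₂ x₃ * κ x₂ x₃ x₁ * κ x₃ x₁ x₂).arg : ℝ) : Real.Angle)
      = (Real.pi : Real.Angle) - ((κ x₁ x₂ x₃ * κ x₂ x₃ x₁ * κ x₃ x₁ x₂).arg : Real.Angle) := by
        push_cast [Real.Angle.coe_sub]; ring_nf
    _ = (D.arg : Real.Angle) + (D.arg : Real.Angle) := by rw [hargκ]; abel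
    _ = ((-2 * (k x₁ x₂ * k x₂ x₃ * k x₃ x₁).arg : ℝ) : Real.Angle) := by
        have : ((-2 * (k x₁ x₂ * k x₂ x₃ * k x₃ x₁).arg : ℝ) : Real.Angle) =
            -((((k x₁ x₂ * k x₂ x₃ * k x₃ x₁).arg : ℝ) : Real.Angle) +
              (((k x₁ x₂ * k x₂ x₃ * k x₃ x₁).arg : ℝ) : Real.Angle)) := by
          rw [show (-2 * (k x₁ x₂ * k x₂ x₃ * k x₃ x₁).arg : ℝ) =
            -((k x₁ x₂ * k x₂ x₃ * k x₃ x₁).arg + (k x₁ x₂ * k x₂ x₃ * k x₃ x₁).arg) by ring]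
          push_cast [Real.Angle.coe_neg, Real.Angle.coe_add]
          ring_nf
        rw [this, hargk]
        abel
end

section
/- For each t ∈ [1, √2] let θ(t) = arccos((t² + 7)/(8t)) and consider the points of ℂ²: x₁ = (0,0), x₂ = (1/2, 0), x₃(t) = (t·e^{iθ(t)}/2, √(2 − t²)/2). Define δ(y, w)² = 1 − (1 − ‖y‖²)(1 − ‖w‖²)/|1 − ⟨y, w⟩|² for y, w in the open unit ball of ℂ². Then for every t ∈ [1, √2]: δ(x₁, x₂) = 1/2, δ(x₁, x₃(t))² = 1/2, and δ(x₂, x₃(t))² = 1/3; in particular all three pairwise pseudohyperbolic distances are independent of t. -/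
/-- The square of the pseudohyperbolic distance on the open unit ball of `ℂ²`,
`δ(y,w)² = 1 − (1 − ‖y‖²)(1 − ‖w‖²)/|1 − ⟨y,w⟩|²`. -/
noncomputable def pseudoHypSq (y w : EuclideanSpace ℂ (Fin 2)) : ℝ :=
  1 - (1 - ‖y‖ ^ 2) * (1 - ‖w‖ ^ 2) / ‖(1 - (inner ℂ y w : ℂ))‖ ^ 2

/-- For `t ∈ [1, √2]`, `θ(t) = arccos((t²+7)/(8t))`, and the points
`x₁ = (0,0)`, `x₂ = (1/2, 0)`, `x₃(t) = (t e^{iθ(t)}/2, √(2−t²)/2)` of `ℂ²`, one has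
`δ(x₁,x₂) = 1/2`, `δ(x₁,x₃(t))² = 1/2`, `δ(x₂,x₃(t))² = 1/3`; in particular all three
pairwise pseudohyperbolic distances are independent of `t`. -/
theorem stmt_18 :
    ∀ t : ℝ, t ∈ Set.Icc 1 (Real.sqrt 2) →
      let θ : ℝ := Real.arccos ((t ^ 2 + 7) / (8 * t))
      let x₁ : EuclideanSpace ℂ (Fin 2) := 0
      let x₂ : EuclideanSpace ℂ (Fin 2) :=
        (WithLp.equiv 2 (Fin 2 → ℂ)).symm ![(1 / 2 : ℂ), 0]
      let x₃ : EuclideanSpace ℂ (Fin 2) :=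
        (WithLp.equiv 2 (Fin 2 → ℂ)).symm
          ![(t : ℂ) * Complex.exp (Complex.I * (θ : ℂ)) / 2,
            ((Real.sqrt (2 - t ^ 2) / 2 : ℝ) : ℂ)]
      Real.sqrt (pseudoHypSq x₁ x₂) = 1 / 2 ∧
        pseudoHypSq x₁ x₃ = 1 / 2 ∧ pseudoHypSq x₂ x₃ = 1 / 3 := by
  intro t ht θ x₁ x₂ x₃
  obtain ⟨ht1, ht2⟩ := ht
  have ht0 : (0:ℝ) < t := lt_of_lt_of_le one_pos ht1
  have htsq : t ^ 2 ≤ 2 := by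
    nlinarith [Real.sq_sqrt (by norm_num : (0:ℝ) ≤ 2), Real.sqrt_nonneg 2]
  have hcos : Real.cos θ = (t ^ 2 + 7) / (8 * t) := by
    apply Real.cos_arccos
    · rw [le_div_iff₀ (by positivity)]; nlinarith
    · rw [div_le_one (by positivity)]; nlinarith
  have hsin := Real.sin_sq_add_cos_sq θ
  have htc : t * Real.cos θ = (t ^ 2 + 7) / 8 := by
    rw [hcos]; field_simp
  have hexp : Complex.exp (Complex.I * (θ : ℂ))
      = Complex.ofReal (Real.cos θ) + Complex.ofReal (Real.sin θ) * Complex.I := by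
    rw [mul_comm, Complex.exp_mul_I, Complex.ofReal_cos, Complex.ofReal_sin]
  have hn2 : ‖x₂‖ ^ 2 = 1 / 4 := by
    simp [x₂, EuclideanSpace.norm_eq, Fin.sum_univ_two]; norm_num
  have hn3 : ‖x₃‖ ^ 2 = 1 / 2 := by
    rw [EuclideanSpace.norm_eq, Real.sq_sqrt (by positivity)]
    simp only [x₃, Fin.sum_univ_two, WithLp.equiv_symm_apply, PiLp.toLp_apply, Matrix.cons_val_zero,
      Matrix.cons_val_one, Matrix.head_cons]
    rw [norm_div, norm_mul]
    simp [Complex.norm_exp, Complex.norm_real, abs_of_nonneg (Real.sqrt_nonneg _),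
      abs_of_pos ht0, div_pow, Real.sq_sqrt (by nlinarith : (0:ℝ) ≤ 2 - t ^ 2)]
    ring
  have hinner : (inner ℂ x₂ x₃ : ℂ) = (t : ℂ) * Complex.exp (Complex.I * (θ : ℂ)) / 4 := by
    simp [x₂, x₃, PiLp.inner_apply, Fin.sum_univ_two, map_ofNat]
    ring
  have habs : ‖(1 - (inner ℂ x₂ x₃ : ℂ))‖ ^ 2 = 9 / 16 := by
    rw [hinner, hexp]
    have key : (1 : ℂ) - (t : ℂ) * ((Real.cos θ : ℂ) + (Real.sin θ : ℂ) * Complex.I) / 4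
        = ((1 - t * Real.cos θ / 4 : ℝ) : ℂ) + ((-(t * Real.sin θ / 4) : ℝ) : ℂ) * Complex.I := by
      push_cast; ring
    rw [key, Complex.sq_norm, Complex.normSq_add_mul_I]
    have h2 : t ^ 2 * Real.sin θ ^ 2 + t ^ 2 * Real.cos θ ^ 2 = t ^ 2 := by
      linear_combination (t ^ 2) * hsin
    linear_combination (1/16 : ℝ) * h2 - (1/2 : ℝ) * htc
  refine ⟨?_, ?_, ?_⟩
  · have h : pseudoHypSq x₁ x₂ = 1 / 4 := by
      simp [pseudoHypSq, x₁, hn2]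
    rw [h, show (1/4:ℝ) = (1/2)^2 by norm_num, Real.sqrt_sq (by norm_num)]
  · simp [pseudoHypSq, x₁, hn3]
  · rw [pseudoHypSq, hn2, hn3, habs]
    norm_num
end
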